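/- For all n ∈ ℕ with n ≥ 1, the number of partial isometries of the star graph S_n is |DPS_n| = 1 + n² + 2·∑_{k=1}^{n−1} C(n−1,k)²·k!, where C(n−1,k) denotes the binomial coefficient. -/

import Mathlib

namespace DPSPaper

instance instMonoidPFun {V : Type*} : Monoid (V →. V) where
  mul f g := g.comp f
  one := PFun.id V
  mul_assoc a b c := (PFun.comp_assoc c b a).symm
  one_mul := PFun.comp_id
  mul_one := PFun.id_comp

/-- The geodesic distance in the star graph `S_n` on vertices `{0,1,...,n-1}`. -/
def starDist (n : ℕ) (x y : Fin n) : ℕ :=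
  if x = y then 0 else if (x : ℕ) = 0 ∨ (y : ℕ) = 0 then 1 else 2

/-- Injectivity of a partial map. -/
def PInj {n : ℕ} (α : Fin n →. Fin n) : Prop :=
  ∀ ⦃x y a : Fin n⦄, a ∈ α x → a ∈ α y → x = y

/-- `α` is a partial isometry of the star graph `S_n`. -/
def IsStarPI {n : ℕ} (α : Fin n →. Fin n) : Prop :=
  PInj α ∧ ∀ ⦃x y u v : Fin n⦄, u ∈ α x → v ∈ α y → starDist n u v = starDist n x y

/-- The set of all partial isometries of `S_n`. -/
def DPSset (n : ℕ) : Set (Fin n →. Fin n) := { α | IsStarPI α }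

/-- domain of an option-valued map as a finset -/
def domF {a b : ℕ} (g : Fin a → Option (Fin b)) : Finset (Fin a) :=
  Finset.univ.filter fun x => (g x).isSome

/-- injectivity for option-valued maps -/
def OInj {a b : ℕ} (g : Fin a → Option (Fin b)) : Prop :=
  ∀ ⦃x y : Fin a⦄ ⦃v : Fin b⦄, g x = some v → g y = some v → x = y

instance {a b : ℕ} (g : Fin a → Option (Fin b)) : Decidable (OInj g) :=
  decidable_of_iff (∀ x y v, g x = some v → g y = some v → x = y) Iff.rfl

lemma mem_domF {a b : ℕ} {g : Fin a → Option (Fin b)} {x : Fin a} :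
    x ∈ domF g ↔ (g x).isSome := by simp [domF]

lemma card_pinj_domEq {m : ℕ} (s : Finset (Fin m)) :
    (Finset.univ.filter fun g : Fin m → Option (Fin m) => OInj g ∧ domF g = s).card
      = m.descFactorial s.card := by
  have key : (Finset.univ : Finset (↥s ↪ Fin m)).card
      = (Finset.univ.filter fun g : Fin m → Option (Fin m) => OInj g ∧ domF g = s).card := by
    apply Finset.card_bij
      (fun (e : ↥s ↪ Fin m) _ => (fun x => if hx : x ∈ s then some (e ⟨x, hx⟩) else none))
    · intro e _
      rw [Finset.mem_filter]
      refine ⟨Finset.mem_univ _, ?_, ?_⟩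
      · intro x y v hx hy
        dsimp only at hx hy
        by_cases hxs : x ∈ s
        · by_cases hys : y ∈ s
          · rw [dif_pos hxs] at hx; rw [dif_pos hys] at hy
            have : e ⟨x, hxs⟩ = e ⟨y, hys⟩ := by
              rw [Option.some_inj] at hx hy; rw [hx, hy]
            exact congrArg Subtype.val (e.injective this)
          · rw [dif_neg hys] at hy; exact absurd hy (by simp)
        · rw [dif_neg hxs] at hx; exact absurd hx (by simp)
      · ext x
        rw [mem_domF]
        by_cases hxs : x ∈ s <;> simp [hxs]
    · intro e _ e' _ hee
      ext ⟨x, hx⟩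
      have := congrFun hee x
      rw [dif_pos hx, dif_pos hx, Option.some_inj] at this
      exact congrArg Fin.val this
    · intro g hg
      rw [Finset.mem_filter] at hg
      obtain ⟨-, hinj, hdom⟩ := hg
      have hget : ∀ x, x ∈ s → (g x).isSome := by
        intro x hx; rw [← hdom] at hx; exact mem_domF.1 hx
      refine ⟨⟨fun x => (g x.1).get (hget x.1 x.2), ?_⟩, Finset.mem_univ _, ?_⟩
      · intro x y hxy
        dsimp only at hxy
        apply Subtype.ext
        apply hinj (v := (g x.1).get (hget x.1 x.2))
        · exact (Option.some_get _).symm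
        · rw [hxy]; exact (Option.some_get _).symm
      · funext x
        by_cases hx : x ∈ s
        · simp only [dif_pos hx]
          exact Option.some_get (hget x hx)
        · simp only [dif_neg hx]
          have : x ∉ domF g := by rw [hdom]; exact hx
          rw [mem_domF] at this
          exact (Option.not_isSome_iff_eq_none.1 this).symm
  rw [← key, Finset.card_univ, Fintype.card_embedding_eq, Fintype.card_coe, Fintype.card_fin]

lemma card_pinj_domCard {m : ℕ} (k : ℕ) :
    (Finset.univ.filter fun g : Fin m → Option (Fin m) => OInj g ∧ (domF g).card = k).card
      = m.choose k ^ 2 * k.factorial := by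
  have hsplit : (Finset.univ.filter fun g : Fin m → Option (Fin m) => OInj g ∧ (domF g).card = k)
      = (Finset.univ.powersetCard k).biUnion
          (fun s => Finset.univ.filter fun g : Fin m → Option (Fin m) => OInj g ∧ domF g = s) := by
    ext g
    simp only [Finset.mem_filter, Finset.mem_univ, true_and, Finset.mem_biUnion,
      Finset.mem_powersetCard_univ]
    constructor
    · rintro ⟨h1, h2⟩; exact ⟨domF g, h2, h1, rfl⟩
    · rintro ⟨s, hs, h1, rfl⟩; exact ⟨h1, hs⟩
  rw [hsplit, Finset.card_biUnion]
  · have : ∀ s ∈ Finset.univ.powersetCard k,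
        (Finset.univ.filter fun g : Fin m → Option (Fin m) => OInj g ∧ domF g = s).card
          = m.descFactorial k := by
      intro s hs
      rw [card_pinj_domEq, Finset.mem_powersetCard_univ.1 hs]
    rw [Finset.sum_congr rfl this, Finset.sum_const, Finset.card_powersetCard,
      Finset.card_univ, Fintype.card_fin, Nat.descFactorial_eq_factorial_mul_choose]
    ring
  · intro s _ t _ hst
    rw [Function.onFun_apply, Finset.disjoint_left]
    intro g hg hg'
    rw [Finset.mem_filter] at hg hg'
    exact hst (hg.2.2 ▸ hg'.2.2)

lemma card_pinj_ge {m : ℕ} (j : ℕ) :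
    (Finset.univ.filter fun g : Fin m → Option (Fin m) => OInj g ∧ j ≤ (domF g).card).card
      = ∑ k ∈ Finset.Icc j m, m.choose k ^ 2 * k.factorial := by
  have hsplit : (Finset.univ.filter fun g : Fin m → Option (Fin m) => OInj g ∧ j ≤ (domF g).card)
      = (Finset.Icc j m).biUnion
          (fun k => Finset.univ.filter
            fun g : Fin m → Option (Fin m) => OInj g ∧ (domF g).card = k) := by
    ext g
    simp only [Finset.mem_filter, Finset.mem_univ, true_and, Finset.mem_biUnion, Finset.mem_Icc]
    constructor
    · rintro ⟨h1, h2⟩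
      refine ⟨(domF g).card, ⟨h2, ?_⟩, h1, rfl⟩
      have := Finset.card_le_univ (domF g)
      simpa using this
    · rintro ⟨k, ⟨hk1, _⟩, h1, h2⟩; exact ⟨h1, h2 ▸ hk1⟩
  rw [hsplit, Finset.card_biUnion]
  · exact Finset.sum_congr rfl fun k _ => card_pinj_domCard k
  · intro a _ b _ hab
    rw [Function.onFun_apply, Finset.disjoint_left]
    intro g hg hg'
    rw [Finset.mem_filter] at hg hg'
    exact hab (hg.2.2 ▸ hg'.2.2)

section StarDist

variable {m : ℕ}

lemma sd_self {n : ℕ} (x : Fin n) : starDist n x x = 0 := if_pos rfl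

lemma sd00 : starDist (m+1) 0 0 = 0 := sd_self 0

lemma sd01 (i : Fin m) : starDist (m+1) 0 i.succ = 1 := by
  have h1 : (0 : Fin (m+1)) ≠ i.succ := (Fin.succ_ne_zero i).symm
  simp [starDist, h1]

lemma sd10 (i : Fin m) : starDist (m+1) i.succ 0 = 1 := by
  have h1 : i.succ ≠ (0 : Fin (m+1)) := Fin.succ_ne_zero i
  simp [starDist, h1]

lemma sd22 {i j : Fin m} (hij : i ≠ j) : starDist (m+1) i.succ j.succ = 2 := by
  have h1 : i.succ ≠ j.succ := fun h => hij (Fin.succ_injective _ h)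
  have h2 : (i.succ : Fin (m+1)).val ≠ 0 := by simp [Fin.val_succ]
  have h3 : (j.succ : Fin (m+1)).val ≠ 0 := by simp [Fin.val_succ]
  simp [starDist, h1, h2, h3]

lemma sd_eq_one {n : ℕ} {u v : Fin n} (h : starDist n u v = 1) :
    u ≠ v ∧ ((u : ℕ) = 0 ∨ (v : ℕ) = 0) := by
  unfold starDist at h
  split_ifs at h with h1 h2 <;> omega

lemma sd_eq_two {n : ℕ} {u v : Fin n} (h : starDist n u v = 2) :
    u ≠ v ∧ (u : ℕ) ≠ 0 ∧ (v : ℕ) ≠ 0 := by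
  unfold starDist at h
  split_ifs at h with h1 h2 <;> omega

end StarDist

section Classes

variable {m : ℕ}

/-- singleton partial map -/
def Bfun {n : ℕ} (x y : Fin n) : Fin n → Option (Fin n) :=
  fun z => if z = x then some y else none

/-- the map 0 ↦ w.succ, l.succ ↦ 0 -/
def Cfun (l w : Fin m) : Fin (m+1) → Option (Fin (m+1)) :=
  fun x => if x = 0 then some w.succ else if x = l.succ then some 0 else none

/-- extension of a leaf-to-leaf map with prescribed value at the center -/
def lift (z : Option (Fin (m+1))) (h : Fin m → Option (Fin m)) :
    Fin (m+1) → Option (Fin (m+1)) :=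
  fun x => Fin.cases z (fun i => (h i).map Fin.succ) x

@[simp] lemma lift_zero (z : Option (Fin (m+1))) (h : Fin m → Option (Fin m)) :
    lift z h 0 = z := rfl

@[simp] lemma lift_succ (z : Option (Fin (m+1))) (h : Fin m → Option (Fin m)) (i : Fin m) :
    lift z h i.succ = (h i).map Fin.succ := by
  simp [lift]

def classA (m : ℕ) : Finset (Fin (m+1) → Option (Fin (m+1))) := {fun _ => none}

def classB (m : ℕ) : Finset (Fin (m+1) → Option (Fin (m+1))) :=
  Finset.image (fun p : Fin (m+1) × Fin (m+1) => Bfun p.1 p.2) Finset.univ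

def classC (m : ℕ) : Finset (Fin (m+1) → Option (Fin (m+1))) :=
  Finset.image (fun p : Fin m × Fin m => Cfun p.1 p.2) Finset.univ

def classD (m : ℕ) : Finset (Fin (m+1) → Option (Fin (m+1))) :=
  Finset.image (lift (some 0))
    (Finset.univ.filter fun h : Fin m → Option (Fin m) => OInj h ∧ 1 ≤ (domF h).card)

def classE (m : ℕ) : Finset (Fin (m+1) → Option (Fin (m+1))) :=
  Finset.image (lift none)
    (Finset.univ.filter fun h : Fin m → Option (Fin m) => OInj h ∧ 2 ≤ (domF h).card)

lemma mem_classA {g} : g ∈ classA m ↔ g = fun _ => none := Finset.mem_singleton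

lemma mem_classB {g} : g ∈ classB m ↔ ∃ x y, g = Bfun x y := by
  simp only [classB, Finset.mem_image, Finset.mem_univ, true_and, Prod.exists]
  constructor
  · rintro ⟨x, y, h⟩; exact ⟨x, y, h.symm⟩
  · rintro ⟨x, y, h⟩; exact ⟨x, y, h.symm⟩

lemma mem_classC {g} : g ∈ classC m ↔ ∃ l w, g = Cfun l w := by
  simp only [classC, Finset.mem_image, Finset.mem_univ, true_and, Prod.exists]
  constructor
  · rintro ⟨x, y, h⟩; exact ⟨x, y, h.symm⟩
  · rintro ⟨x, y, h⟩; exact ⟨x, y, h.symm⟩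

lemma mem_classD {g} :
    g ∈ classD m ↔ ∃ h, OInj h ∧ 1 ≤ (domF h).card ∧ g = lift (some 0) h := by
  simp only [classD, Finset.mem_image, Finset.mem_filter, Finset.mem_univ, true_and]
  constructor
  · rintro ⟨h, ⟨h1, h2⟩, h3⟩; exact ⟨h, h1, h2, h3.symm⟩
  · rintro ⟨h, h1, h2, h3⟩; exact ⟨h, ⟨h1, h2⟩, h3.symm⟩

lemma mem_classE {g} :
    g ∈ classE m ↔ ∃ h, OInj h ∧ 2 ≤ (domF h).card ∧ g = lift none h := by
  simp only [classE, Finset.mem_image, Finset.mem_filter, Finset.mem_univ, true_and]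
  constructor
  · rintro ⟨h, ⟨h1, h2⟩, h3⟩; exact ⟨h, h1, h2, h3.symm⟩
  · rintro ⟨h, h1, h2, h3⟩; exact ⟨h, ⟨h1, h2⟩, h3.symm⟩

lemma card_classA : (classA m).card = 1 := Finset.card_singleton _

lemma Bfun_injective {n : ℕ} :
    Function.Injective (fun p : Fin n × Fin n => Bfun p.1 p.2) := by
  rintro ⟨x, y⟩ ⟨x', y'⟩ h
  dsimp only at h
  by_cases hx : x = x'
  · subst hx
    have := congrFun h x
    simp [Bfun] at this
    rw [this]
  · have := congrFun h x
    simp [Bfun, hx] at this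

lemma card_classB : (classB m).card = (m+1)^2 := by
  rw [classB, Finset.card_image_of_injective _ Bfun_injective, Finset.card_univ]
  simp [sq]

lemma Cfun_injective : Function.Injective (fun p : Fin m × Fin m => Cfun p.1 p.2) := by
  rintro ⟨l, w⟩ ⟨l', w'⟩ h
  dsimp only at h
  have h0 := congrFun h 0
  simp [Cfun] at h0
  have hw : w = w' := h0
  have hl := congrFun h l.succ
  by_cases hll : l = l'
  · rw [hll, hw]
  · have hne : l.succ ≠ l'.succ := fun hc => hll (Fin.succ_injective _ hc)
    simp [Cfun, Fin.succ_ne_zero, hne] at hl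

lemma card_classC : (classC m).card = m^2 := by
  rw [classC, Finset.card_image_of_injective _ Cfun_injective, Finset.card_univ]
  simp [sq]

lemma lift_injective (z : Option (Fin (m+1))) : Function.Injective (lift z) := by
  intro h h' hhh
  funext i
  have := congrFun hhh i.succ
  simp only [lift_succ] at this
  exact Option.map_injective (Fin.succ_injective m) this

lemma card_classD : (classD m).card = ∑ k ∈ Finset.Icc 1 m, m.choose k ^ 2 * k.factorial := by
  rw [classD, Finset.card_image_of_injective _ (lift_injective _), card_pinj_ge]

lemma card_classE : (classE m).card = ∑ k ∈ Finset.Icc 2 m, m.choose k ^ 2 * k.factorial := by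
  rw [classE, Finset.card_image_of_injective _ (lift_injective _), card_pinj_ge]

end Classes

section OKlemmas

variable {m : ℕ}

/-- partial isometry condition for option-valued maps -/
def OKg (n : ℕ) (g : Fin n → Option (Fin n)) : Prop :=
  OInj g ∧ ∀ ⦃x y u v : Fin n⦄, g x = some u → g y = some v →
    starDist n u v = starDist n x y

instance {n : ℕ} (g : Fin n → Option (Fin n)) : Decidable (OKg n g) :=
  decidable_of_iff (OInj g ∧ ∀ x y u v, g x = some u → g y = some v →
    starDist n u v = starDist n x y) Iff.rfl

/-- restriction of a map on the star to the leaves -/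
def down (g : Fin (m+1) → Option (Fin (m+1))) : Fin m → Option (Fin m) :=
  fun i => (g i.succ).bind (fun u => Fin.cases none some u)

lemma down_eq_some {g : Fin (m+1) → Option (Fin (m+1))} {i : Fin m} {w : Fin m} :
    down g i = some w ↔ g i.succ = some w.succ := by
  unfold down
  cases hg : g i.succ with
  | none => simp
  | some u =>
    induction u using Fin.cases with
    | zero => simp [(Fin.succ_ne_zero w).symm]
    | succ v => simp [Fin.succ_inj, eq_comm]

lemma Bfun_eq_some {n : ℕ} {x y z u : Fin n} (h : Bfun x y z = some u) : z = x ∧ u = y := by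
  unfold Bfun at h
  split_ifs at h with h1
  · exact ⟨h1, (Option.some_inj.1 h).symm⟩

lemma Cfun_eq_some {l w : Fin m} {z u : Fin (m+1)} (h : Cfun l w z = some u) :
    (z = 0 ∧ u = w.succ) ∨ (z = l.succ ∧ u = 0) := by
  unfold Cfun at h
  split_ifs at h with h1 h2
  · exact Or.inl ⟨h1, (Option.some_inj.1 h).symm⟩
  · exact Or.inr ⟨h2, (Option.some_inj.1 h).symm⟩

lemma lift_eq_some {z : Option (Fin (m+1))} {h : Fin m → Option (Fin m)} {x u : Fin (m+1)}
    (hx : lift z h x = some u) :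
    (x = 0 ∧ z = some u) ∨ ∃ i w, x = i.succ ∧ h i = some w ∧ u = w.succ := by
  induction x using Fin.cases with
  | zero => exact Or.inl ⟨rfl, hx⟩
  | succ i =>
    rw [lift_succ] at hx
    cases hh : h i with
    | none => rw [hh] at hx; simp at hx
    | some w =>
      rw [hh] at hx
      simp only [Option.map_some] at hx
      exact Or.inr ⟨i, w, rfl, hh, (Option.some_inj.1 hx).symm⟩

lemma OK_A : OKg (m+1) (fun _ => none) := by
  constructor
  · intro x y v hx _; exact absurd hx (by simp)
  · intro x y u v hx _; exact absurd hx (by simp)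

lemma OK_B {n : ℕ} (x y : Fin n) : OKg n (Bfun x y) := by
  constructor
  · intro a b v ha hb
    obtain ⟨ha1, -⟩ := Bfun_eq_some ha
    obtain ⟨hb1, -⟩ := Bfun_eq_some hb
    rw [ha1, hb1]
  · intro a b u v ha hb
    obtain ⟨ha1, ha2⟩ := Bfun_eq_some ha
    obtain ⟨hb1, hb2⟩ := Bfun_eq_some hb
    subst ha1; subst ha2; subst hb1; subst hb2
    rw [sd_self, sd_self]

lemma OK_C (l w : Fin m) : OKg (m+1) (Cfun l w) := by
  constructor
  · intro a b v ha hb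
    rcases Cfun_eq_some ha with ⟨ha1, ha2⟩ | ⟨ha1, ha2⟩ <;>
      rcases Cfun_eq_some hb with ⟨hb1, hb2⟩ | ⟨hb1, hb2⟩
    · rw [ha1, hb1]
    · exact absurd (ha2 ▸ hb2 : w.succ = (0 : Fin (m+1))) (Fin.succ_ne_zero w)
    · exact absurd (ha2 ▸ hb2 : (0 : Fin (m+1)) = w.succ).symm (Fin.succ_ne_zero w)
    · rw [ha1, hb1]
  · intro a b u v ha hb
    rcases Cfun_eq_some ha with ⟨ha1, ha2⟩ | ⟨ha1, ha2⟩ <;>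
      rcases Cfun_eq_some hb with ⟨hb1, hb2⟩ | ⟨hb1, hb2⟩ <;>
      subst ha1 <;> subst ha2 <;> subst hb1 <;> subst hb2
    · rw [sd_self, sd_self]
    · rw [sd10, sd01]
    · rw [sd01, sd10]
    · rw [sd_self, sd_self]

lemma OK_lift0 {h : Fin m → Option (Fin m)} (hinj : OInj h) :
    OKg (m+1) (lift (some 0) h) := by
  constructor
  · intro x y v hx hy
    rcases lift_eq_some hx with ⟨hx1, hx2⟩ | ⟨i, w, hx1, hx2, hx3⟩ <;>
      rcases lift_eq_some hy with ⟨hy1, hy2⟩ | ⟨j, w', hy1, hy2, hy3⟩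
    · rw [hx1, hy1]
    · exact absurd (hy3 ▸ Option.some_inj.1 hx2 : (0 : Fin (m+1)) = w'.succ).symm
        (Fin.succ_ne_zero w')
    · exact absurd (hx3 ▸ Option.some_inj.1 hy2 : (0 : Fin (m+1)) = w.succ).symm
        (Fin.succ_ne_zero w)
    · rw [hx1, hy1, Fin.succ_inj]
      apply hinj hx2
      rw [hy2]
      congr 1
      exact Fin.succ_injective _ (hx3.symm.trans hy3).symm
  · intro x y u v hx hy
    rcases lift_eq_some hx with ⟨hx1, hx2⟩ | ⟨i, w, hx1, hx2, hx3⟩ <;>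
      rcases lift_eq_some hy with ⟨hy1, hy2⟩ | ⟨j, w', hy1, hy2, hy3⟩
    · have hu : u = 0 := (Option.some_inj.1 hx2).symm
      have hv : v = 0 := (Option.some_inj.1 hy2).symm
      subst hx1; subst hy1; rw [hu, hv]
    · have hu : u = 0 := (Option.some_inj.1 hx2).symm
      subst hx1; subst hy1; subst hy3; subst hu
      rw [sd01, sd01]
    · have hv : v = 0 := (Option.some_inj.1 hy2).symm
      subst hy1; subst hx1; subst hx3; subst hv
      rw [sd10, sd10]
    · subst hx1; subst hy1; subst hx3; subst hy3
      by_cases hij : i = j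
      · subst hij
        have : w = w' := Option.some_inj.1 (hx2 ▸ hy2)
        rw [this, sd_self, sd_self]
      · have hww : w ≠ w' := fun hc => hij (hinj hx2 (hc ▸ hy2))
        rw [sd22 hww, sd22 hij]

lemma OK_liftNone {h : Fin m → Option (Fin m)} (hinj : OInj h) :
    OKg (m+1) (lift none h) := by
  constructor
  · intro x y v hx hy
    rcases lift_eq_some hx with ⟨-, hx2⟩ | ⟨i, w, hx1, hx2, hx3⟩
    · exact absurd hx2 (by simp)
    rcases lift_eq_some hy with ⟨-, hy2⟩ | ⟨j, w', hy1, hy2, hy3⟩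
    · exact absurd hy2 (by simp)
    rw [hx1, hy1, Fin.succ_inj]
    apply hinj hx2
    rw [hy2]
    congr 1
    exact Fin.succ_injective _ (hx3.symm.trans hy3).symm
  · intro x y u v hx hy
    rcases lift_eq_some hx with ⟨-, hx2⟩ | ⟨i, w, hx1, hx2, hx3⟩
    · exact absurd hx2 (by simp)
    rcases lift_eq_some hy with ⟨-, hy2⟩ | ⟨j, w', hy1, hy2, hy3⟩
    · exact absurd hy2 (by simp)
    subst hx1; subst hy1; subst hx3; subst hy3
    by_cases hij : i = j
    · subst hij
      have : w = w' := Option.some_inj.1 (hx2 ▸ hy2)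
      rw [this, sd_self, sd_self]
    · have hww : w ≠ w' := fun hc => hij (hinj hx2 (hc ▸ hy2))
      rw [sd22 hww, sd22 hij]

end OKlemmas

section Classify

variable {m : ℕ}

lemma eq_succ_of_ne_zero {x : Fin (m+1)} (h : x ≠ 0) : ∃ w : Fin m, x = w.succ :=
  ⟨x.pred h, (Fin.succ_pred x h).symm⟩

lemma classify (m : ℕ) :
    (Finset.univ.filter fun g : Fin (m+1) → Option (Fin (m+1)) => OKg (m+1) g)
      = ((((classA m ∪ classB m) ∪ classC m) ∪ classD m) ∪ classE m) := by
  ext g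
  simp only [Finset.mem_filter, Finset.mem_univ, true_and, Finset.mem_union]
  constructor
  · rintro ⟨hinj, hiso⟩
    rcases hg0 : g 0 with _ | v
    -- case: center not in the domain
    · rcases Finset.eq_empty_or_nonempty
        (Finset.univ.filter fun i : Fin m => (g i.succ).isSome) with hte | ⟨l, hl⟩
      · -- empty map : class A
        refine Or.inl (Or.inl (Or.inl (Or.inl (mem_classA.2 ?_))))
        funext x
        induction x using Fin.cases with
        | zero => exact hg0
        | succ i =>
          have : i ∉ Finset.univ.filter fun i : Fin m => (g i.succ).isSome := by
            rw [hte]; exact Finset.notMem_empty i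
          simp only [Finset.mem_filter, Finset.mem_univ, true_and] at this
          exact Option.not_isSome_iff_eq_none.1 this
      · have hlsome : (g l.succ).isSome := (Finset.mem_filter.1 hl).2
        obtain ⟨yv, hyv⟩ := Option.isSome_iff_exists.1 hlsome
        by_cases ht1 : (Finset.univ.filter fun i : Fin m => (g i.succ).isSome) ⊆ {l}
        · -- exactly one leaf : class B
          refine Or.inl (Or.inl (Or.inl (Or.inr (mem_classB.2 ⟨l.succ, yv, ?_⟩))))
          funext z
          induction z using Fin.cases with
          | zero =>
            rw [hg0]
            unfold Bfun
            rw [if_neg (fun hc : (0 : Fin (m+1)) = l.succ => Fin.succ_ne_zero l hc.symm)]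
          | succ i =>
            by_cases hil : i = l
            · subst hil
              rw [hyv]
              unfold Bfun
              rw [if_pos rfl]
            · have : i ∉ Finset.univ.filter fun i : Fin m => (g i.succ).isSome := by
                intro hc
                exact hil (Finset.mem_singleton.1 (ht1 hc))
              simp only [Finset.mem_filter, Finset.mem_univ, true_and] at this
              rw [Option.not_isSome_iff_eq_none.1 this]
              unfold Bfun
              rw [if_neg (fun hc : i.succ = l.succ => hil (Fin.succ_injective _ hc))]
        · -- at least two leaves : class E
          obtain ⟨j, hjt, hjl⟩ := Finset.not_subset.1 ht1
          rw [Finset.mem_singleton] at hjl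
          have himg : ∀ (i : Fin m) (u : Fin (m+1)), g i.succ = some u → u ≠ 0 := by
            intro i u hu hu0
            obtain ⟨k, hkt, hki⟩ :
                ∃ k, k ∈ (Finset.univ.filter fun i : Fin m => (g i.succ).isSome) ∧ k ≠ i := by
              by_cases hil : i = l
              · exact ⟨j, hjt, fun hc => hjl (hil ▸ hc)⟩
              · exact ⟨l, hl, fun hc => hil hc.symm⟩
            obtain ⟨w, hw⟩ := Option.isSome_iff_exists.1 ((Finset.mem_filter.1 hkt).2)
            have hd := hiso hu hw
            rw [sd22 (fun hc : i = k => hki hc.symm)] at hd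
            obtain ⟨-, hu', -⟩ := sd_eq_two hd
            exact hu' (by rw [hu0]; rfl)
          have hOinj : OInj (down g) := by
            intro i j' w hi hj'
            rw [down_eq_some] at hi hj'
            exact Fin.succ_injective _ (hinj hi hj')
          have hmem : ∀ i, i ∈ (Finset.univ.filter fun i : Fin m => (g i.succ).isSome) →
              i ∈ domF (down g) := by
            intro i hi
            obtain ⟨u, hu⟩ := Option.isSome_iff_exists.1 ((Finset.mem_filter.1 hi).2)
            obtain ⟨w, rfl⟩ := eq_succ_of_ne_zero (himg i u hu)
            rw [mem_domF, down_eq_some.2 hu]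
            rfl
          refine Or.inr (mem_classE.2 ⟨down g, hOinj, ?_, ?_⟩)
          · have h1 : 1 < (Finset.univ.filter fun i : Fin m => (g i.succ).isSome).card :=
              Finset.one_lt_card.2 ⟨j, hjt, l, hl, hjl⟩
            have h2 := Finset.card_le_card
              (fun i hi => hmem i hi :
                (Finset.univ.filter fun i : Fin m => (g i.succ).isSome) ⊆ domF (down g))
            omega
          · funext x
            induction x using Fin.cases with
            | zero => rw [lift_zero, hg0]
            | succ i =>
              rw [lift_succ]
              cases hgi : g i.succ with
              | none =>
                have : down g i = none := by unfold down; rw [hgi]; rfl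
                rw [this]; rfl
              | some u =>
                obtain ⟨w, rfl⟩ := eq_succ_of_ne_zero (himg i u hgi)
                rw [down_eq_some.2 hgi]
                rfl
    -- case: center in the domain
    · induction v using Fin.cases with
      | zero =>
        -- g 0 = some 0
        have himg : ∀ (i : Fin m) (u : Fin (m+1)), g i.succ = some u → u ≠ 0 := by
          intro i u hu hu0
          have hd := hiso hu hg0
          rw [sd10 i] at hd
          obtain ⟨hne, -⟩ := sd_eq_one hd
          exact hne (by rw [hu0])
        have hOinj : OInj (down g) := by
          intro i j' w hi hj'
          rw [down_eq_some] at hi hj'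
          exact Fin.succ_injective _ (hinj hi hj')
        have hnone : ∀ i : Fin m, down g i = none → g i.succ = none := by
          intro i hi
          cases hgi : g i.succ with
          | none => rfl
          | some u =>
            obtain ⟨w, rfl⟩ := eq_succ_of_ne_zero (himg i u hgi)
            rw [down_eq_some.2 hgi] at hi
            exact absurd hi (by simp)
        have hgsplit : g = lift (some 0) (down g) := by
          funext x
          induction x using Fin.cases with
          | zero => rw [lift_zero, hg0]
          | succ i =>
            rw [lift_succ]
            cases hgi : g i.succ with
            | none =>
              have : down g i = none := by unfold down; rw [hgi]; rfl
              rw [this]; rfl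
            | some u =>
              obtain ⟨w, rfl⟩ := eq_succ_of_ne_zero (himg i u hgi)
              rw [down_eq_some.2 hgi]
              rfl
        by_cases hd : (domF (down g)).card = 0
        · -- only the center : class B with (0,0)
          refine Or.inl (Or.inl (Or.inl (Or.inr (mem_classB.2 ⟨0, 0, ?_⟩))))
          have hdown : ∀ i, down g i = none := by
            intro i
            have : i ∉ domF (down g) := by
              rw [Finset.card_eq_zero] at hd
              rw [hd]
              exact Finset.notMem_empty i
            rw [mem_domF] at this
            exact Option.not_isSome_iff_eq_none.1 this
          funext z
          induction z using Fin.cases with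
          | zero =>
            rw [hg0]
            unfold Bfun
            rw [if_pos rfl]
          | succ i =>
            rw [hnone i (hdown i)]
            unfold Bfun
            rw [if_neg (Fin.succ_ne_zero i)]
        · -- class D
          exact Or.inl (Or.inr (mem_classD.2 ⟨down g, hOinj, by omega, hgsplit⟩))
      | succ w =>
        -- g 0 = some w.succ
        have himg0 : ∀ (i : Fin m) (u : Fin (m+1)), g i.succ = some u → u = 0 := by
          intro i u hu
          have hd := hiso hg0 hu
          rw [sd01 i] at hd
          obtain ⟨-, h0⟩ := sd_eq_one hd
          rcases h0 with h0 | h0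
          · exact absurd h0 (by simp [Fin.val_succ])
          · exact Fin.ext (by simpa using h0)
        rcases Finset.eq_empty_or_nonempty
            (Finset.univ.filter fun i : Fin m => (g i.succ).isSome) with hte | ⟨l, hl⟩
        · -- only the center : class B with (0, w.succ)
          refine Or.inl (Or.inl (Or.inl (Or.inr (mem_classB.2 ⟨0, w.succ, ?_⟩))))
          funext z
          induction z using Fin.cases with
          | zero =>
            rw [hg0]
            unfold Bfun
            rw [if_pos rfl]
          | succ i =>
            have : i ∉ Finset.univ.filter fun i : Fin m => (g i.succ).isSome := by
              rw [hte]; exact Finset.notMem_empty i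
            simp only [Finset.mem_filter, Finset.mem_univ, true_and] at this
            rw [Option.not_isSome_iff_eq_none.1 this]
            unfold Bfun
            rw [if_neg (Fin.succ_ne_zero i)]
        · -- class C
          have hlsome : (g l.succ).isSome := (Finset.mem_filter.1 hl).2
          obtain ⟨u, hu⟩ := Option.isSome_iff_exists.1 hlsome
          have hu0 : g l.succ = some 0 := by rw [hu, himg0 l u hu]
          refine Or.inl (Or.inl (Or.inr (mem_classC.2 ⟨l, w, ?_⟩)))
          funext z
          induction z using Fin.cases with
          | zero =>
            rw [hg0]
            unfold Cfun
            rw [if_pos rfl]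
          | succ i =>
            by_cases hil : i = l
            · subst hil
              rw [hu0]
              unfold Cfun
              rw [if_neg (Fin.succ_ne_zero i), if_pos rfl]
            · have hnone : g i.succ = none := by
                cases hgi : g i.succ with
                | none => rfl
                | some u' =>
                  have : u' = 0 := himg0 i u' hgi
                  subst this
                  have := hinj hgi hu0
                  exact absurd (Fin.succ_injective _ this) hil
              rw [hnone]
              unfold Cfun
              rw [if_neg (Fin.succ_ne_zero i),
                if_neg (fun hc : i.succ = l.succ => hil (Fin.succ_injective _ hc))]
  · rintro ((((h | h) | h) | h) | h)
    · rw [mem_classA.1 h]; exact ⟨OK_A.1, OK_A.2⟩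
    · obtain ⟨x, y, rfl⟩ := mem_classB.1 h; exact ⟨(OK_B x y).1, (OK_B x y).2⟩
    · obtain ⟨l, w, rfl⟩ := mem_classC.1 h; exact ⟨(OK_C l w).1, (OK_C l w).2⟩
    · obtain ⟨h', h1, -, rfl⟩ := mem_classD.1 h; exact ⟨(OK_lift0 h1).1, (OK_lift0 h1).2⟩
    · obtain ⟨h', h1, -, rfl⟩ := mem_classE.1 h; exact ⟨(OK_liftNone h1).1, (OK_liftNone h1).2⟩

end Classify

section Cards

variable {m : ℕ}

lemma domF_nonempty_of_one_le {h : Fin m → Option (Fin m)} (hh : 1 ≤ (domF h).card) :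
    ∃ i w, h i = some w := by
  obtain ⟨i, hi⟩ := Finset.card_pos.1 hh
  obtain ⟨w, hw⟩ := Option.isSome_iff_exists.1 (mem_domF.1 hi)
  exact ⟨i, w, hw⟩

lemma disjAB : Disjoint (classA m) (classB m) := by
  rw [Finset.disjoint_left]
  intro g hA hB
  obtain ⟨x, y, rfl⟩ := mem_classB.1 hB
  have h0 := congrFun (mem_classA.1 hA) x
  unfold Bfun at h0
  rw [if_pos rfl] at h0
  exact absurd h0 (by simp)

lemma disjAC : Disjoint (classA m) (classC m) := by
  rw [Finset.disjoint_left]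
  intro g hA hC
  obtain ⟨l, w, rfl⟩ := mem_classC.1 hC
  have h0 := congrFun (mem_classA.1 hA) 0
  unfold Cfun at h0
  rw [if_pos rfl] at h0
  exact absurd h0 (by simp)

lemma disjAD : Disjoint (classA m) (classD m) := by
  rw [Finset.disjoint_left]
  intro g hA hD
  obtain ⟨h, h1, h2, rfl⟩ := mem_classD.1 hD
  have h0 := congrFun (mem_classA.1 hA) 0
  rw [lift_zero] at h0
  exact absurd h0 (by simp)

lemma disjAE : Disjoint (classA m) (classE m) := by
  rw [Finset.disjoint_left]
  intro g hA hE
  obtain ⟨h, h1, h2, rfl⟩ := mem_classE.1 hE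
  obtain ⟨i, w, hw⟩ := domF_nonempty_of_one_le (le_trans one_le_two h2)
  have h0 := congrFun (mem_classA.1 hA) i.succ
  rw [lift_succ, hw] at h0
  exact absurd h0 (by simp)

lemma disjBC : Disjoint (classB m) (classC m) := by
  rw [Finset.disjoint_left]
  intro g hB hC
  obtain ⟨x, y, rfl⟩ := mem_classB.1 hB
  obtain ⟨l, w, hC'⟩ := mem_classC.1 hC
  have h0 := congrFun hC' 0
  unfold Cfun at h0
  rw [if_pos rfl] at h0
  obtain ⟨hx, -⟩ := Bfun_eq_some h0
  have h2 := congrFun hC' l.succ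
  unfold Cfun at h2
  rw [if_neg (Fin.succ_ne_zero l), if_pos rfl] at h2
  obtain ⟨hx2, -⟩ := Bfun_eq_some h2
  exact Fin.succ_ne_zero l (hx2.trans hx.symm)

lemma disjBD : Disjoint (classB m) (classD m) := by
  rw [Finset.disjoint_left]
  intro g hB hD
  obtain ⟨x, y, rfl⟩ := mem_classB.1 hB
  obtain ⟨h, h1, h2, hD'⟩ := mem_classD.1 hD
  obtain ⟨i, w, hw⟩ := domF_nonempty_of_one_le h2
  have h0 := congrFun hD' 0
  rw [lift_zero] at h0
  obtain ⟨hx, -⟩ := Bfun_eq_some h0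
  have hi := congrFun hD' i.succ
  rw [lift_succ, hw] at hi
  obtain ⟨hx2, -⟩ := Bfun_eq_some hi
  exact Fin.succ_ne_zero i (hx2.trans hx.symm)

lemma disjBE : Disjoint (classB m) (classE m) := by
  rw [Finset.disjoint_left]
  intro g hB hE
  obtain ⟨x, y, rfl⟩ := mem_classB.1 hB
  obtain ⟨h, h1, h2, hE'⟩ := mem_classE.1 hE
  obtain ⟨i, hi, j, hj, hij⟩ := Finset.one_lt_card.1 (by omega : 1 < (domF h).card)
  obtain ⟨wi, hwi⟩ := Option.isSome_iff_exists.1 (mem_domF.1 hi)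
  obtain ⟨wj, hwj⟩ := Option.isSome_iff_exists.1 (mem_domF.1 hj)
  have h0 := congrFun hE' i.succ
  rw [lift_succ, hwi] at h0
  obtain ⟨hx, -⟩ := Bfun_eq_some h0
  have h2' := congrFun hE' j.succ
  rw [lift_succ, hwj] at h2'
  obtain ⟨hx2, -⟩ := Bfun_eq_some h2'
  exact hij (Fin.succ_injective _ (hx.trans hx2.symm))

lemma disjCD : Disjoint (classC m) (classD m) := by
  rw [Finset.disjoint_left]
  intro g hC hD
  obtain ⟨l, w, rfl⟩ := mem_classC.1 hC
  obtain ⟨h, h1, h2, hD'⟩ := mem_classD.1 hD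
  have h0 := congrFun hD' 0
  unfold Cfun at h0
  rw [if_pos rfl, lift_zero] at h0
  exact Fin.succ_ne_zero w (Option.some_inj.1 h0)

lemma disjCE : Disjoint (classC m) (classE m) := by
  rw [Finset.disjoint_left]
  intro g hC hE
  obtain ⟨l, w, rfl⟩ := mem_classC.1 hC
  obtain ⟨h, h1, h2, hE'⟩ := mem_classE.1 hE
  have h0 := congrFun hE' 0
  unfold Cfun at h0
  rw [if_pos rfl, lift_zero] at h0
  exact absurd h0 (by simp)

lemma disjDE : Disjoint (classD m) (classE m) := by
  rw [Finset.disjoint_left]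
  intro g hD hE
  obtain ⟨h, h1, h2, rfl⟩ := mem_classD.1 hD
  obtain ⟨h', h1', h2', hE'⟩ := mem_classE.1 hE
  have h0 := congrFun hE' 0
  rw [lift_zero, lift_zero] at h0
  exact absurd h0 (by simp)

lemma card_filter_OKg (m : ℕ) :
    (Finset.univ.filter fun g : Fin (m+1) → Option (Fin (m+1)) => OKg (m+1) g).card
      = 1 + (m+1)^2 + m^2
        + (∑ k ∈ Finset.Icc 1 m, m.choose k ^ 2 * k.factorial)
        + (∑ k ∈ Finset.Icc 2 m, m.choose k ^ 2 * k.factorial) := by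
  have hDE : Disjoint ((((classA m ∪ classB m) ∪ classC m) ∪ classD m)) (classE m) :=
    Finset.disjoint_union_left.2
      ⟨Finset.disjoint_union_left.2
        ⟨Finset.disjoint_union_left.2 ⟨disjAE, disjBE⟩, disjCE⟩, disjDE⟩
  have hD : Disjoint (((classA m ∪ classB m) ∪ classC m)) (classD m) :=
    Finset.disjoint_union_left.2
      ⟨Finset.disjoint_union_left.2 ⟨disjAD, disjBD⟩, disjCD⟩
  have hC : Disjoint ((classA m ∪ classB m)) (classC m) :=
    Finset.disjoint_union_left.2 ⟨disjAC, disjBC⟩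
  rw [classify m, Finset.card_union_of_disjoint hDE, Finset.card_union_of_disjoint hD,
    Finset.card_union_of_disjoint hC, Finset.card_union_of_disjoint disjAB,
    card_classA, card_classB, card_classC, card_classD, card_classE]

end Cards

section Bridge

/-- option-valued maps to partial functions -/
def toPFun {n : ℕ} (g : Fin n → Option (Fin n)) : Fin n →. Fin n :=
  fun x => Part.ofOption (g x)

lemma ofOption_inj {β : Type*} : Function.Injective (Part.ofOption (α := β)) := by
  intro o o' h
  cases o with
  | none =>
    cases o' with
    | none => rfl
    | some a =>
      have h1 : a ∈ Part.ofOption (some a) := Part.mem_ofOption.2 rfl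
      rw [← h] at h1
      exact absurd (Part.mem_ofOption.1 h1) (by simp)
  | some a =>
    cases o' with
    | none =>
      have h1 : a ∈ Part.ofOption (some a) := Part.mem_ofOption.2 rfl
      rw [h] at h1
      exact absurd (Part.mem_ofOption.1 h1) (by simp)
    | some b =>
      have h1 : a ∈ Part.ofOption (some a) := Part.mem_ofOption.2 rfl
      rw [h] at h1
      have h2 := Part.mem_ofOption.1 h1
      rw [Option.mem_def] at h2
      exact h2.symm

lemma toPFun_injective {n : ℕ} : Function.Injective (toPFun (n := n)) := by
  intro g g' hgg
  funext x
  exact ofOption_inj (congrFun hgg x)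

lemma transfer {n : ℕ} {α : Fin n →. Fin n} {g : Fin n → Option (Fin n)}
    (hm : ∀ x a, a ∈ α x ↔ g x = some a) : IsStarPI α ↔ OKg n g := by
  constructor
  · rintro ⟨h1, h2⟩
    exact ⟨fun x y v hx hy => h1 ((hm x v).2 hx) ((hm y v).2 hy),
           fun x y u v hx hy => h2 ((hm x u).2 hx) ((hm y v).2 hy)⟩
  · rintro ⟨h1, h2⟩
    exact ⟨fun x y v hx hy => h1 ((hm x v).1 hx) ((hm y v).1 hy),
           fun x y u v hx hy => h2 ((hm x u).1 hx) ((hm y v).1 hy)⟩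

lemma bridge (n : ℕ) :
    (DPSset n).ncard = (Finset.univ.filter fun g : Fin n → Option (Fin n) => OKg n g).card := by
  classical
  have hset : DPSset n = toPFun '' {g | OKg n g} := by
    ext α
    constructor
    · intro hα
      refine ⟨fun x => @Part.toOption _ (α x) (Classical.dec _), ?_, ?_⟩
      · exact (transfer (fun x a => (@Part.toOption_eq_some_iff _ (α x) (Classical.dec _) a).symm)).mp hα
      · funext x
        exact @Part.of_toOption _ (α x) (Classical.dec _)
    · rintro ⟨g, hg, rfl⟩
      exact (transfer (fun x a => by
        simp [toPFun, Part.mem_ofOption, Option.mem_def])).mpr hg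
  rw [hset, Set.ncard_image_of_injective _ toPFun_injective]
  rw [show {g : Fin n → Option (Fin n) | OKg n g}
      = ↑(Finset.univ.filter fun g : Fin n → Option (Fin n) => OKg n g) by
    ext g; simp]
  exact Set.ncard_coe_finset _

end Bridge

theorem statement6 (n : ℕ) (hn : 1 ≤ n) :
    (DPSset n).ncard =
      1 + n ^ 2 + 2 * ∑ k ∈ Finset.Icc 1 (n - 1), (Nat.choose (n - 1) k) ^ 2 * k.factorial := by
  obtain ⟨m, rfl⟩ : ∃ m, n = m + 1 := ⟨n - 1, by omega⟩
  rw [bridge, card_filter_OKg]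
  have hred : m + 1 - 1 = m := rfl
  rw [hred]
  have hsplit : (∑ k ∈ Finset.Icc 1 m, m.choose k ^ 2 * k.factorial)
      = m^2 + ∑ k ∈ Finset.Icc 2 m, m.choose k ^ 2 * k.factorial := by
    rcases Nat.eq_zero_or_pos m with hm | hm
    · subst hm; simp
    · have h1 : Finset.Icc 1 m = insert 1 (Finset.Icc 2 m) := by
        ext a; simp only [Finset.mem_Icc, Finset.mem_insert]; omega
      rw [h1, Finset.sum_insert (by simp)]
      simp [Nat.choose_one_right, Nat.factorial_one, sq]
  rw [hsplit]
  ring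

end DPSPaper
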